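/- Let n ≥ 1, r = ⌊(n+2)/2⌋, β = [[0, yz],[y, 0]] ∈ M₂(F) with v(y) = −n, and ψ_β(x) = ψ(tr(β(x−1))) for x ∈ SL₂^r(ℤ_p). Suppose φ : T → ℂ^× is a group homomorphism such that φ(t) = ψ_β(t) for all t ∈ T ∩ SL₂^r(ℤ_p). Then T·SL₂^r(ℤ_p) is a subgroup of SL₂(ℤ_p), and the assignment t·x ↦ φ(t)·ψ_β(x) (t ∈ T, x ∈ SL₂^r(ℤ_p)) is a well-defined group homomorphism T·SL₂^r(ℤ_p) → ℂ^×. -/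
import Mathlib


open Matrix

/-- The congruence subgroup `SL₂^r(ℤ_p) = {x ∈ SL₂(ℤ_p) : x - 1 ≡ 0 mod p^r}`, as a set. -/
def slLevel (p : ℕ) [Fact p.Prime] (r : ℕ) : Set (Matrix.SpecialLinearGroup (Fin 2) ℤ_[p]) :=
  {x | ∀ i j : Fin 2, ((p : ℤ_[p]) ^ r) ∣ (((x : Matrix (Fin 2) (Fin 2) ℤ_[p])) - 1) i j}

/-- The traceless matrix `β = !![0, y·z; y, 0]` attached to the traceless element `β = yα`
of `E = F(α)`, `α² = z`, under the identification `a + bα ↦ !![a, bz; b, a]`. -/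
noncomputable def betaMat (p : ℕ) [Fact p.Prime] (y : ℚ_[p]) (z : ℤ_[p]ˣ) : Matrix (Fin 2) (Fin 2) ℚ_[p] :=
  !![0, y * ((z : ℤ_[p]) : ℚ_[p]); y, 0]

/-- `ψ_β(x) = ψ(tr(β(x-1)))`. -/
noncomputable def psiBeta (p : ℕ) [Fact p.Prime] (ψ : AddChar ℚ_[p] ℂˣ)
    (β : Matrix (Fin 2) (Fin 2) ℚ_[p]) (x : Matrix.SpecialLinearGroup (Fin 2) ℤ_[p]) : ℂˣ :=
  ψ (Matrix.trace (β * ((x : Matrix (Fin 2) (Fin 2) ℤ_[p]).map (fun t => (t : ℚ_[p])) - 1)))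

/-- The embedded norm-one torus `T = {!![u, vz; v, u] : u² - zv² = 1} ⊆ SL₂(ℤ_p)`,
the copy of `E¹` in `SL₂(ℤ_p)`. -/
def TsetSL (p : ℕ) [Fact p.Prime] (z : ℤ_[p]ˣ) :
    Set (Matrix.SpecialLinearGroup (Fin 2) ℤ_[p]) :=
  {g | ∃ u v : ℤ_[p], u ^ 2 - (z : ℤ_[p]) * v ^ 2 = 1 ∧
    (g : Matrix (Fin 2) (Fin 2) ℤ_[p]) = !![u, v * (z : ℤ_[p]); v, u]}

/-- The set `T·SL₂^r(ℤ_p)`. -/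
def TGset (p : ℕ) [Fact p.Prime] (z : ℤ_[p]ˣ) (r : ℕ) :
    Set (Matrix.SpecialLinearGroup (Fin 2) ℤ_[p]) :=
  {g | ∃ t ∈ TsetSL p z, ∃ x ∈ slLevel p r, g = t * x}

/-! ### Auxiliary lemmas -/

namespace St6Aux

variable {p : ℕ} [Fact p.Prime]

local notation "G" => Matrix.SpecialLinearGroup (Fin 2) ℤ_[p]
local notation "M2Z" => Matrix (Fin 2) (Fin 2) ℤ_[p]

lemma D_mul_left {d : ℤ_[p]} {M : Matrix (Fin 2) (Fin 2) ℤ_[p]}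
    (h : ∀ i j, d ∣ M i j) (A : Matrix (Fin 2) (Fin 2) ℤ_[p]) (i j : Fin 2) :
    d ∣ (M * A) i j := by
  rw [Matrix.mul_apply]
  exact Finset.dvd_sum fun k _ => Dvd.dvd.mul_right (h i k) _

lemma D_mul_right {d : ℤ_[p]} {M : Matrix (Fin 2) (Fin 2) ℤ_[p]}
    (h : ∀ i j, d ∣ M i j) (A : Matrix (Fin 2) (Fin 2) ℤ_[p]) (i j : Fin 2) :
    d ∣ (A * M) i j := by
  rw [Matrix.mul_apply]
  exact Finset.dvd_sum fun k _ => Dvd.dvd.mul_left (h k j) _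

lemma slLevel_one (r : ℕ) : (1 : G) ∈ slLevel p r := by
  intro i j; simp [Matrix.SpecialLinearGroup.coe_one]

lemma slLevel_mul {r : ℕ} {x x' : G}
    (hx : x ∈ slLevel p r) (hx' : x' ∈ slLevel p r) : x * x' ∈ slLevel p r := by
  intro i j
  have key : ((x * x' : G) : M2Z) - 1
      = ((x : M2Z) - 1) * (x' : M2Z) + ((x' : M2Z) - 1) := by
    simp only [Matrix.SpecialLinearGroup.coe_mul]; noncomm_ring
  rw [key, Matrix.add_apply]
  exact dvd_add (D_mul_left hx _ i j) (hx' i j)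

lemma slLevel_inv {r : ℕ} {x : G} (hx : x ∈ slLevel p r) : x⁻¹ ∈ slLevel p r := by
  intro i j
  have h1 : ((x⁻¹ : G) : M2Z) * (x : M2Z) = 1 := by
    rw [← Matrix.SpecialLinearGroup.coe_mul, inv_mul_cancel, Matrix.SpecialLinearGroup.coe_one]
  have key : ((x⁻¹ : G) : M2Z) - 1 = -(((x⁻¹ : G) : M2Z) * ((x : M2Z) - 1)) := by
    rw [mul_sub, mul_one, h1, neg_sub]
  rw [key, Matrix.neg_apply]
  exact dvd_neg.mpr (D_mul_right hx _ i j)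

lemma slLevel_conj {r : ℕ} (g : G) {x : G} (hx : x ∈ slLevel p r) :
    g⁻¹ * x * g ∈ slLevel p r := by
  intro i j
  have h1 : ((g⁻¹ : G) : M2Z) * (g : M2Z) = 1 := by
    rw [← Matrix.SpecialLinearGroup.coe_mul, inv_mul_cancel, Matrix.SpecialLinearGroup.coe_one]
  have key : ((g⁻¹ * x * g : G) : M2Z) - 1
      = ((g⁻¹ : G) : M2Z) * ((((x : M2Z) - 1)) * (g : M2Z)) := by
    simp only [Matrix.SpecialLinearGroup.coe_mul]
    rw [sub_mul, one_mul, mul_sub, ← mul_assoc, h1]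
  rw [key]
  exact D_mul_right (fun i j => D_mul_left (fun i j => hx i j) _ i j) _ i j

lemma eta_fin_two {α : Type*} {a b c d a' b' c' d' : α}
    (h1 : a = a') (h2 : b = b') (h3 : c = c') (h4 : d = d') :
    !![a, b; c, d] = !![a', b'; c', d'] := by rw [h1, h2, h3, h4]

lemma T_one {z : ℤ_[p]ˣ} : (1 : G) ∈ TsetSL p z :=
  ⟨1, 0, by ring, by simp [Matrix.SpecialLinearGroup.coe_one, Matrix.one_fin_two]⟩

lemma T_mul {z : ℤ_[p]ˣ} {t t' : G}
    (ht : t ∈ TsetSL p z) (ht' : t' ∈ TsetSL p z) : t * t' ∈ TsetSL p z := by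
  obtain ⟨u, v, hdet, hmat⟩ := ht
  obtain ⟨u', v', hdet', hmat'⟩ := ht'
  refine ⟨u * u' + (z : ℤ_[p]) * v * v', u * v' + v * u', ?_, ?_⟩
  · have h : (u * u' + (z:ℤ_[p]) * v * v') ^ 2 - (z:ℤ_[p]) * (u * v' + v * u') ^ 2
        = (u ^ 2 - (z:ℤ_[p]) * v ^ 2) * (u' ^ 2 - (z:ℤ_[p]) * v' ^ 2) := by ring
    rw [h, hdet, hdet', mul_one]
  · rw [Matrix.SpecialLinearGroup.coe_mul, hmat, hmat', Matrix.mul_fin_two]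
    exact eta_fin_two (by ring) (by ring) (by ring) (by ring)

lemma T_inv {z : ℤ_[p]ˣ} {t : G} (ht : t ∈ TsetSL p z) : t⁻¹ ∈ TsetSL p z := by
  obtain ⟨u, v, hdet, hmat⟩ := ht
  refine ⟨u, -v, by rw [← hdet]; ring, ?_⟩
  rw [Matrix.SpecialLinearGroup.coe_inv, hmat, Matrix.adjugate_fin_two]
  exact eta_fin_two (by simp) (by simp [mul_comm]) (by simp) (by simp)

/-- The coefficient-wise coercion of an `SL₂(ℤ_p)` element to a `ℚ_p`-matrix. -/
noncomputable def mp (x : Matrix.SpecialLinearGroup (Fin 2) ℤ_[p]) : Matrix (Fin 2) (Fin 2) ℚ_[p] :=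
  (x : Matrix (Fin 2) (Fin 2) ℤ_[p]).map (fun t : ℤ_[p] => (t : ℚ_[p]))

lemma mp_mul (x x' : G) : mp (x * x') = mp x * mp x' := by
  unfold mp
  rw [Matrix.SpecialLinearGroup.coe_mul]
  exact Matrix.map_mul (f := PadicInt.Coe.ringHom)

lemma mp_one : mp (1 : G) = 1 := by
  unfold mp
  rw [Matrix.SpecialLinearGroup.coe_one]
  exact Matrix.map_one _ (by simp) (by simp)

lemma map_sub_one (A : Matrix (Fin 2) (Fin 2) ℤ_[p]) :
    (A - 1).map (fun t : ℤ_[p] => (t : ℚ_[p])) = A.map (fun t : ℤ_[p] => (t : ℚ_[p])) - 1 := by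
  ext i j
  by_cases h : i = j <;>
    simp [Matrix.map_apply, Matrix.one_apply, h]

lemma beta_comm {y : ℚ_[p]} {z : ℤ_[p]ˣ} {t : G}
    (ht : t ∈ TsetSL p z) : betaMat p y z * mp t = mp t * betaMat p y z := by
  obtain ⟨u, v, hdet, hmat⟩ := ht
  unfold mp
  rw [hmat]
  ext i j
  fin_cases i <;> fin_cases j <;>
    · simp [betaMat, Matrix.mul_apply, Fin.sum_univ_two]
      push_cast
      ring

lemma psi_key {ψ : AddChar ℚ_[p] ℂˣ} (hψ1 : ∀ t : ℤ_[p], ψ ((p : ℚ_[p]) * (t : ℚ_[p])) = 1)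
    {n r : ℕ} (h2r : n + 1 ≤ 2 * r) {y : ℚ_[p]} (hy : y ≠ 0) (hyv : y.valuation = -(n : ℤ))
    (c : ℤ_[p]) : ψ (y * ((p : ℚ_[p]) ^ (2 * r) * (c : ℚ_[p]))) = 1 := by
  have hp0 : (p : ℝ) ≠ 0 := by
    exact_mod_cast (Fact.out : p.Prime).pos.ne'
  have hnorm : ‖(p : ℚ_[p]) ^ n * y‖ ≤ 1 := by
    rw [norm_mul, norm_pow, Padic.norm_p, Padic.norm_eq_zpow_neg_valuation hy, hyv, neg_neg,
      inv_pow, zpow_natCast]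
    rw [inv_mul_cancel₀ (pow_ne_zero _ hp0)]
  set w : ℤ_[p] := ⟨(p : ℚ_[p]) ^ n * y, hnorm⟩ with hwdef
  have hw : (w : ℚ_[p]) = (p : ℚ_[p]) ^ n * y := rfl
  obtain ⟨m, hm⟩ : ∃ m, 2 * r = 1 + n + m := ⟨2 * r - (n + 1), by omega⟩
  have key : y * ((p : ℚ_[p]) ^ (2 * r) * (c : ℚ_[p]))
      = (p : ℚ_[p]) * (((w * (p : ℤ_[p]) ^ m * c : ℤ_[p]) : ℚ_[p])) := by
    push_cast [hw]
    rw [hm, pow_add, pow_add]; ring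
  rw [key]; exact hψ1 _

lemma psi_trace_map {ψ : AddChar ℚ_[p] ℂˣ} (hψ1 : ∀ t : ℤ_[p], ψ ((p : ℚ_[p]) * (t : ℚ_[p])) = 1)
    {n r : ℕ} (h2r : n + 1 ≤ 2 * r) {y : ℚ_[p]} (hy : y ≠ 0) (hyv : y.valuation = -(n : ℤ))
    (z : ℤ_[p]ˣ) (Q : Matrix (Fin 2) (Fin 2) ℤ_[p])
    (hQ : ∀ i j, ((p : ℤ_[p]) ^ (2 * r)) ∣ Q i j) :
    ψ (Matrix.trace (betaMat p y z * Q.map (fun t : ℤ_[p] => (t : ℚ_[p])))) = 1 := by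
  obtain ⟨c, hc⟩ := hQ 1 0
  obtain ⟨c', hc'⟩ := hQ 0 1
  have htr : Matrix.trace (betaMat p y z * Q.map (fun t : ℤ_[p] => (t : ℚ_[p])))
      = y * ((p : ℚ_[p]) ^ (2 * r) * (((z : ℤ_[p]) * c + c' : ℤ_[p]) : ℚ_[p])) := by
    rw [Matrix.trace_fin_two]
    simp only [betaMat, Matrix.mul_apply, Fin.sum_univ_two, Matrix.map_apply,
      Matrix.cons_val', Matrix.cons_val_zero, Matrix.cons_val_one, Matrix.head_cons,
      Matrix.head_fin_const, Matrix.empty_val', Matrix.cons_val_fin_one, Matrix.of_apply,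
      hc, hc']
    push_cast
    ring
  rw [htr]
  exact psi_key hψ1 h2r hy hyv _

lemma psiBeta_eq (ψ : AddChar ℚ_[p] ℂˣ) (β : Matrix (Fin 2) (Fin 2) ℚ_[p]) (x : G) :
    psiBeta p ψ β x = ψ (Matrix.trace (β * (mp x - 1))) := rfl

lemma psiBeta_one (ψ : AddChar ℚ_[p] ℂˣ) (β : Matrix (Fin 2) (Fin 2) ℚ_[p]) :
    psiBeta p ψ β (1 : G) = 1 := by
  rw [psiBeta_eq, mp_one, sub_self, mul_zero, Matrix.trace_zero]
  exact AddChar.map_zero_eq_one ψ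

lemma psiBeta_mul {ψ : AddChar ℚ_[p] ℂˣ} (hψ1 : ∀ t : ℤ_[p], ψ ((p : ℚ_[p]) * (t : ℚ_[p])) = 1)
    {n r : ℕ} (h2r : n + 1 ≤ 2 * r) {y : ℚ_[p]} (hy : y ≠ 0) (hyv : y.valuation = -(n : ℤ))
    (z : ℤ_[p]ˣ) {x x' : G} (hx : x ∈ slLevel p r) (hx' : x' ∈ slLevel p r) :
    psiBeta p ψ (betaMat p y z) (x * x')
      = psiBeta p ψ (betaMat p y z) x * psiBeta p ψ (betaMat p y z) x' := by
  have h1 : mp (x * x') - 1 = (mp x - 1) + (mp x' - 1) + (mp x - 1) * (mp x' - 1) := by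
    rw [mp_mul]; noncomm_ring
  have h2 : (mp x - 1) * (mp x' - 1)
      = (((x : M2Z) - 1) * ((x' : M2Z) - 1)).map (fun t : ℤ_[p] => (t : ℚ_[p])) := by
    have hmm : (((x : M2Z) - 1) * ((x' : M2Z) - 1)).map (fun t : ℤ_[p] => (t : ℚ_[p]))
        = ((x : M2Z) - 1).map (fun t : ℤ_[p] => (t : ℚ_[p]))
          * ((x' : M2Z) - 1).map (fun t : ℤ_[p] => (t : ℚ_[p])) :=
      Matrix.map_mul (f := PadicInt.Coe.ringHom)
    rw [hmm, map_sub_one, map_sub_one]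
    rfl
  have hQ : ∀ i j, ((p : ℤ_[p]) ^ (2 * r)) ∣ ((((x : M2Z) - 1) * ((x' : M2Z) - 1)) i j) := by
    intro i j
    rw [Matrix.mul_apply]
    refine Finset.dvd_sum fun k _ => ?_
    rw [two_mul, pow_add]
    exact mul_dvd_mul (hx i k) (hx' k j)
  rw [psiBeta_eq, psiBeta_eq, psiBeta_eq, h1, mul_add, mul_add, Matrix.trace_add,
    Matrix.trace_add, AddChar.map_add_eq_mul, AddChar.map_add_eq_mul, h2,
    psi_trace_map hψ1 h2r hy hyv z _ hQ, mul_one]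

lemma psiBeta_conj (ψ : AddChar ℚ_[p] ℂˣ) {y : ℚ_[p]} {z : ℤ_[p]ˣ} {t : G}
    (ht : t ∈ TsetSL p z) (x : G) :
    psiBeta p ψ (betaMat p y z) (t⁻¹ * x * t) = psiBeta p ψ (betaMat p y z) x := by
  have hA : mp t * mp (t⁻¹) = 1 := by rw [← mp_mul, mul_inv_cancel, mp_one]
  have hA' : mp (t⁻¹) * mp t = 1 := by rw [← mp_mul, inv_mul_cancel, mp_one]
  have hcomm' : betaMat p y z * mp (t⁻¹) = mp (t⁻¹) * betaMat p y z := beta_comm (T_inv ht)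
  have hkey : mp (t⁻¹ * x * t) - 1 = mp (t⁻¹) * ((mp x - 1) * mp t) := by
    rw [mp_mul, mp_mul, sub_mul, one_mul, mul_sub, ← mul_assoc, hA']
  rw [psiBeta_eq, psiBeta_eq, hkey]
  have hassoc : betaMat p y z * (mp (t⁻¹) * ((mp x - 1) * mp t))
      = (mp (t⁻¹) * (betaMat p y z * (mp x - 1))) * mp t := by
    simp only [← mul_assoc]; rw [hcomm']
  rw [hassoc, Matrix.trace_mul_comm, ← mul_assoc, hA, one_mul]

end St6Aux

open St6Aux

/-- with `n ≥ 1`, `r = ⌊(n+2)/2⌋`, `β = !![0, yz; y, 0]`, `v(y) = -n`, and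
`φ : T → ℂˣ` a homomorphism agreeing with `ψ_β` on `T ∩ SL₂^r(ℤ_p)`: the set `T·SL₂^r(ℤ_p)`
is a subgroup of `SL₂(ℤ_p)`, and `t·x ↦ φ(t)·ψ_β(x)` is a well-defined group homomorphism
`T·SL₂^r(ℤ_p) → ℂˣ`. -/
theorem stmt6 (p : ℕ) [Fact p.Prime] (hp : p ≠ 2)
    (z : ℤ_[p]ˣ) (hz : ¬ ∃ w : ℤ_[p], w * w = (z : ℤ_[p]))
    (ψ : AddChar ℚ_[p] ℂˣ)
    (hψ1 : ∀ t : ℤ_[p], ψ ((p : ℚ_[p]) * (t : ℚ_[p])) = 1)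
    (hψ2 : ∃ t : ℤ_[p], ψ ((t : ℚ_[p])) ≠ 1)
    (n r : ℕ) (hn : 1 ≤ n) (hr : r = (n + 2) / 2)
    (y : ℚ_[p]) (hy : y ≠ 0) (hyv : y.valuation = -(n : ℤ))
    (φ : Matrix.SpecialLinearGroup (Fin 2) ℤ_[p] → ℂˣ)
    (hφmul : ∀ t ∈ TsetSL p z, ∀ t' ∈ TsetSL p z, φ (t * t') = φ t * φ t')
    (hφag : ∀ t ∈ TsetSL p z, t ∈ slLevel p r → φ t = psiBeta p ψ (betaMat p y z) t) :
    ((1 : Matrix.SpecialLinearGroup (Fin 2) ℤ_[p]) ∈ TGset p z r) ∧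
    (∀ a ∈ TGset p z r, ∀ b ∈ TGset p z r, a * b ∈ TGset p z r) ∧
    (∀ a ∈ TGset p z r, a⁻¹ ∈ TGset p z r) ∧
    (∀ t ∈ TsetSL p z, ∀ x ∈ slLevel p r, ∀ t' ∈ TsetSL p z, ∀ x' ∈ slLevel p r,
      t * x = t' * x' →
        φ t * psiBeta p ψ (betaMat p y z) x = φ t' * psiBeta p ψ (betaMat p y z) x') ∧
    (∀ t ∈ TsetSL p z, ∀ x ∈ slLevel p r, ∀ t' ∈ TsetSL p z, ∀ x' ∈ slLevel p r,
      ∃ t'' ∈ TsetSL p z, ∃ x'' ∈ slLevel p r,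
        t * x * (t' * x') = t'' * x'' ∧
        φ t'' * psiBeta p ψ (betaMat p y z) x''
          = (φ t * psiBeta p ψ (betaMat p y z) x) * (φ t' * psiBeta p ψ (betaMat p y z) x')) := by
  have h2r : n + 1 ≤ 2 * r := by omega
  refine ⟨?_, ?_, ?_, ?_, ?_⟩
  · exact ⟨1, T_one, 1, slLevel_one r, (mul_one 1).symm⟩
  · rintro a ⟨t, ht, x, hx, rfl⟩ b ⟨t', ht', x', hx', rfl⟩
    refine ⟨t * t', T_mul ht ht', (t'⁻¹ * x * t') * x',
      slLevel_mul (slLevel_conj t' hx) hx', ?_⟩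
    group
  · rintro a ⟨t, ht, x, hx, rfl⟩
    refine ⟨t⁻¹, T_inv ht, (t⁻¹)⁻¹ * x⁻¹ * t⁻¹, slLevel_conj t⁻¹ (slLevel_inv hx), ?_⟩
    group
  · intro t ht x hx t' ht' x' hx' heq
    set s : Matrix.SpecialLinearGroup (Fin 2) ℤ_[p] := t'⁻¹ * t with hsdef
    have hst : s ∈ TsetSL p z := T_mul (T_inv ht') ht
    have hsx : s * x = x' := by
      rw [hsdef, mul_assoc, heq, ← mul_assoc, inv_mul_cancel, one_mul]
    have hsl : s ∈ slLevel p r := by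
      have : s = x' * x⁻¹ := by rw [← hsx, mul_assoc, mul_inv_cancel, mul_one]
      rw [this]; exact slLevel_mul hx' (slLevel_inv hx)
    have hts : t' * s = t := by rw [hsdef, ← mul_assoc, mul_inv_cancel, one_mul]
    have hφt : φ t = φ t' * φ s := by rw [← hts]; exact hφmul t' ht' s hst
    have hφs : φ s = psiBeta p ψ (betaMat p y z) s := hφag s hst hsl
    have hψmul : psiBeta p ψ (betaMat p y z) s * psiBeta p ψ (betaMat p y z) x
        = psiBeta p ψ (betaMat p y z) x' := by
      rw [← psiBeta_mul hψ1 h2r hy hyv z hsl hx, hsx]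
    rw [hφt, hφs, mul_assoc, hψmul]
  · intro t ht x hx t' ht' x' hx'
    refine ⟨t * t', T_mul ht ht', (t'⁻¹ * x * t') * x',
      slLevel_mul (slLevel_conj t' hx) hx', by group, ?_⟩
    rw [hφmul t ht t' ht',
      psiBeta_mul hψ1 h2r hy hyv z (slLevel_conj t' hx) hx',
      psiBeta_conj ψ ht' x]
    exact mul_mul_mul_comm _ _ _ _
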